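/- Proposition (2×2 games, part b): Let Γ be a 2×2 bimatrix game that is non-degenerate for player I and non-degenerate for player II. Then exactly one of the following alternatives holds: (i) there exists x^L ∈ X^L with x^L ∉ NE(X), and Y^L = NE(Y); or (ii) there exists y^L ∈ Y^L with y^L ∉ NE(Y), and X^L = NE(X); or (iii) X^L ⊆ NE(X) and Y^L ⊆ NE(Y). -/

import Mathlib

open Matrix

noncomputable section

/-- The set of mixed strategies: the standard simplex in `ℝ^m`. -/
def Simp (m : ℕ) : Set (Fin m → ℝ) := stdSimplex ℝ (Fin m)

/-- Bilinear payoff `xᵀ A y`. -/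
def pay {m n : ℕ} (A : Matrix (Fin m) (Fin n) ℝ) (x : Fin m → ℝ) (y : Fin n → ℝ) : ℝ :=
  x ⬝ᵥ A.mulVec y

/-- Payoff of a mixed strategy `x` against the pure strategy `j`: `α(x, e_j) = (xᵀA)_j`. -/
def purePay {m n : ℕ} (A : Matrix (Fin m) (Fin n) ℝ) (x : Fin m → ℝ) (j : Fin n) : ℝ :=
  Matrix.vecMul x A j

/-- Pure best replies of player II against `x`. -/
def BRII {m n : ℕ} (B : Matrix (Fin m) (Fin n) ℝ) (x : Fin m → ℝ) : Set (Fin n) :=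
  {j | ∀ k, purePay B x k ≤ purePay B x j}

/-- Best-reply region `X(j)` of column `j`. -/
def XReg {m n : ℕ} (B : Matrix (Fin m) (Fin n) ℝ) (j : Fin n) : Set (Fin m → ℝ) :=
  {x ∈ Simp m | j ∈ BRII B x}

/-- `D`: columns whose best-reply region has a fully mixed point. -/
def Dset {m n : ℕ} (B : Matrix (Fin m) (Fin n) ℝ) : Set (Fin n) :=
  {j | ∃ x ∈ XReg B j, ∀ i, 0 < x i}

/-- `E(j)`: columns of `B` payoff-equivalent to column `j`. -/
def Ecols {m n : ℕ} (B : Matrix (Fin m) (Fin n) ℝ) (j : Fin n) : Set (Fin n) :=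
  {k | ∀ i, B i k = B i j}

/-- `min_j α(x, e_j)`. -/
def minPure {m n : ℕ} (A : Matrix (Fin m) (Fin n) ℝ) (x : Fin m → ℝ) : ℝ :=
  sInf {w | ∃ j, w = purePay A x j}

/-- `max_j α(x, e_j)`. -/
def maxPure {m n : ℕ} (A : Matrix (Fin m) (Fin n) ℝ) (x : Fin m → ℝ) : ℝ :=
  sSup {w | ∃ j, w = purePay A x j}

/-- `max_{j ∈ BR_II(x)} α(x, e_j)`. -/
def maxBR {m n : ℕ} (A B : Matrix (Fin m) (Fin n) ℝ) (x : Fin m → ℝ) : ℝ :=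
  sSup {w | ∃ j ∈ BRII B x, w = purePay A x j}

/-- Matrix game value `v_A = max_{x ∈ X} min_j α(x, e_j)`. -/
def matVal {m n : ℕ} (A : Matrix (Fin m) (Fin n) ℝ) : ℝ :=
  sSup {v | ∃ x ∈ Simp m, v = minPure A x}

/-- `min_{k ∈ E(j)} α(x, e_k)`. -/
def minE {m n : ℕ} (A B : Matrix (Fin m) (Fin n) ℝ) (j : Fin n) (x : Fin m → ℝ) : ℝ :=
  sInf {w | ∃ k ∈ Ecols B j, w = purePay A x k}

/-- Commitment value `α^L = max_{j∈D} max_{x∈X(j)} min_{k∈E(j)} α(x,e_k)`. -/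
def alphaL {m n : ℕ} (A B : Matrix (Fin m) (Fin n) ℝ) : ℝ :=
  sSup {v | ∃ j ∈ Dset B, ∃ x ∈ XReg B j, v = minE A B j x}

/-- Highest leader payoff `α^H = max_{j : X(j)≠∅} max_{x∈X(j)} α(x,e_j)`. -/
def alphaH {m n : ℕ} (A B : Matrix (Fin m) (Fin n) ℝ) : ℝ :=
  sSup {v | ∃ j, ∃ x ∈ XReg B j, v = purePay A x j}

/-- Commitment optimal strategies of the leader (player I). -/
def XLset {m n : ℕ} (A B : Matrix (Fin m) (Fin n) ℝ) : Set (Fin m → ℝ) :=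
  {x | ∃ j ∈ Dset B, x ∈ XReg B j ∧ minE A B j x = alphaL A B}

/-- Non-degeneracy for player I: no mixed strategy of player I has more pure best
replies (among player II's pure strategies) than the size of its support. -/
def NondegFor {m n : ℕ} (B : Matrix (Fin m) (Fin n) ℝ) : Prop :=
  ∀ x ∈ Simp m, (BRII B x).ncard ≤ {i | x i ≠ 0}.ncard

/-- Nash equilibrium of the bimatrix game `(A,B)`. -/
def isNE {m n : ℕ} (A B : Matrix (Fin m) (Fin n) ℝ) (x : Fin m → ℝ) (y : Fin n → ℝ) : Prop :=
  x ∈ Simp m ∧ y ∈ Simp n ∧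
  (∀ x' ∈ Simp m, pay A x' y ≤ pay A x y) ∧
  (∀ y' ∈ Simp n, pay B x y' ≤ pay B x y)

/-- Strategies of player I appearing in some Nash equilibrium. -/
def NEX {m n : ℕ} (A B : Matrix (Fin m) (Fin n) ℝ) : Set (Fin m → ℝ) :=
  {x | ∃ y, isNE A B x y}

/-- Strategies of player II appearing in some Nash equilibrium. -/
def NEY {m n : ℕ} (A B : Matrix (Fin m) (Fin n) ℝ) : Set (Fin n → ℝ) :=
  {y | ∃ x, isNE A B x y}

/-- Weakly unilaterally competitive bimatrix game. -/
def WUC {m n : ℕ} (A B : Matrix (Fin m) (Fin n) ℝ) : Prop :=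
  (∀ x₁ ∈ Simp m, ∀ x₂ ∈ Simp m, ∀ y ∈ Simp n,
    (pay A x₁ y > pay A x₂ y → pay B x₁ y ≤ pay B x₂ y) ∧
    (pay A x₁ y = pay A x₂ y → pay B x₁ y = pay B x₂ y)) ∧
  (∀ y₁ ∈ Simp n, ∀ y₂ ∈ Simp n, ∀ x ∈ Simp m,
    (pay B x y₁ > pay B x y₂ → pay A x y₁ ≤ pay A x y₂) ∧
    (pay B x y₁ = pay B x y₂ → pay A x y₁ = pay A x y₂))

namespace Stmt16Proof

/-- pure strategy -/
def pur (i : Fin 2) : Fin 2 → ℝ := fun k => if k = i then 1 else 0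

lemma fin2 (k a b : Fin 2) (h : b ≠ a) : k = a ∨ k = b := by
  fin_cases k <;> fin_cases a <;> fin_cases b <;> simp_all

lemma fin2' {a b : Fin 2} (h : b ≠ a) : (a = 0 ∧ b = 1) ∨ (a = 1 ∧ b = 0) := by
  fin_cases a <;> fin_cases b <;> simp_all

lemma mem_simp {x : Fin 2 → ℝ} : x ∈ Simp 2 ↔ 0 ≤ x 0 ∧ 0 ≤ x 1 ∧ x 0 + x 1 = 1 := by
  unfold Simp stdSimplex
  constructor
  · rintro ⟨h1, h2⟩
    exact ⟨h1 0, h1 1, by simpa [Fin.sum_univ_two] using h2⟩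
  · rintro ⟨h0, h1, hs⟩
    refine ⟨fun i => ?_, by simpa [Fin.sum_univ_two] using hs⟩
    fin_cases i <;> assumption

lemma pur_mem (i : Fin 2) : pur i ∈ Simp 2 := by
  rw [mem_simp]
  fin_cases i <;> norm_num [pur]

lemma purePay_eq (A : Matrix (Fin 2) (Fin 2) ℝ) (x : Fin 2 → ℝ) (j : Fin 2) :
    purePay A x j = x 0 * A 0 j + x 1 * A 1 j := by
  simp [purePay, Matrix.vecMul, dotProduct, Fin.sum_univ_two]

lemma mulVec_eq (A : Matrix (Fin 2) (Fin 2) ℝ) (y : Fin 2 → ℝ) (i : Fin 2) :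
    A.mulVec y i = A i 0 * y 0 + A i 1 * y 1 := by
  simp [Matrix.mulVec, dotProduct, Fin.sum_univ_two]

lemma pay_eq_dot1 (A : Matrix (Fin 2) (Fin 2) ℝ) (x y : Fin 2 → ℝ) :
    pay A x y = x 0 * A.mulVec y 0 + x 1 * A.mulVec y 1 := by
  simp [pay, dotProduct, Fin.sum_univ_two]

lemma pay_eq_dot2 (B : Matrix (Fin 2) (Fin 2) ℝ) (x y : Fin 2 → ℝ) :
    pay B x y = purePay B x 0 * y 0 + purePay B x 1 * y 1 := by
  simp [pay_eq_dot1, purePay_eq, mulVec_eq]; ring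

lemma purePay_pur (M : Matrix (Fin 2) (Fin 2) ℝ) (a b : Fin 2) :
    purePay M (pur a) b = M a b := by
  fin_cases a <;> simp [purePay_eq, pur]

lemma mulVec_pur (M : Matrix (Fin 2) (Fin 2) ℝ) (a b : Fin 2) :
    M.mulVec (pur a) b = M b a := by
  fin_cases a <;> simp [mulVec_eq, pur]

lemma pay_pur_left (A : Matrix (Fin 2) (Fin 2) ℝ) (i : Fin 2) (y : Fin 2 → ℝ) :
    pay A (pur i) y = A.mulVec y i := by
  fin_cases i <;> simp [pay_eq_dot1, pur]

lemma pay_pur_right (B : Matrix (Fin 2) (Fin 2) ℝ) (x : Fin 2 → ℝ) (j : Fin 2) :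
    pay B x (pur j) = purePay B x j := by
  fin_cases j <;> simp [pay_eq_dot2, pur]

lemma pay_pur_pur (M : Matrix (Fin 2) (Fin 2) ℝ) (a b : Fin 2) :
    pay M (pur a) (pur b) = M a b := by
  rw [pay_pur_left, mulVec_pur]

lemma simp_pair {a b : Fin 2} (h : b ≠ a) {x : Fin 2 → ℝ} (hx : x ∈ Simp 2) :
    0 ≤ x a ∧ 0 ≤ x b ∧ x a + x b = 1 := by
  obtain ⟨h0, h1, hs⟩ := mem_simp.1 hx
  rcases fin2' h with ⟨rfl, rfl⟩ | ⟨rfl, rfl⟩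
  · exact ⟨h0, h1, hs⟩
  · exact ⟨h1, h0, by linarith⟩

lemma purePay_pair {a b : Fin 2} (h : b ≠ a) (M : Matrix (Fin 2) (Fin 2) ℝ)
    (x : Fin 2 → ℝ) (j : Fin 2) :
    purePay M x j = x a * M a j + x b * M b j := by
  rcases fin2' h with ⟨rfl, rfl⟩ | ⟨rfl, rfl⟩ <;> rw [purePay_eq] <;> ring

lemma pay_pair1 {a b : Fin 2} (h : b ≠ a) (A : Matrix (Fin 2) (Fin 2) ℝ)
    (x y : Fin 2 → ℝ) :
    pay A x y = x a * A.mulVec y a + x b * A.mulVec y b := by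
  rcases fin2' h with ⟨rfl, rfl⟩ | ⟨rfl, rfl⟩ <;> rw [pay_eq_dot1] <;> ring

lemma pay_pair2 {a b : Fin 2} (h : b ≠ a) (B : Matrix (Fin 2) (Fin 2) ℝ)
    (x y : Fin 2 → ℝ) :
    pay B x y = purePay B x a * y a + purePay B x b * y b := by
  rcases fin2' h with ⟨rfl, rfl⟩ | ⟨rfl, rfl⟩ <;> rw [pay_eq_dot2] <;> ring

lemma mulVec_pair {a b : Fin 2} (h : b ≠ a) (A : Matrix (Fin 2) (Fin 2) ℝ)
    (y : Fin 2 → ℝ) (k : Fin 2) :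
    A.mulVec y k = A k a * y a + A k b * y b := by
  rcases fin2' h with ⟨rfl, rfl⟩ | ⟨rfl, rfl⟩ <;> rw [mulVec_eq] <;> ring

lemma mulVec_eqT (A : Matrix (Fin 2) (Fin 2) ℝ) (y : Fin 2 → ℝ) (k : Fin 2) :
    A.mulVec y k = purePay Aᵀ y k := by
  rw [mulVec_eq, purePay_eq, Matrix.transpose_apply, Matrix.transpose_apply]; ring

lemma eq_pur_of {a b : Fin 2} (h : b ≠ a) {x : Fin 2 → ℝ} (hx : x ∈ Simp 2)
    (h0 : x b = 0) : x = pur a := by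
  obtain ⟨_, _, hs⟩ := simp_pair h hx
  funext k
  rcases fin2 k a b h with rfl | rfl
  · rw [show pur k k = 1 from if_pos rfl]; linarith
  · rw [show pur a k = 0 from if_neg h]; exact h0

lemma mem_XReg {B : Matrix (Fin 2) (Fin 2) ℝ} {x : Fin 2 → ℝ} {j : Fin 2} :
    x ∈ XReg B j ↔ x ∈ Simp 2 ∧ ∀ k, purePay B x k ≤ purePay B x j :=
  Iff.rfl

end Stmt16Proof
namespace Stmt16Proof

lemma isNE_iff {A B : Matrix (Fin 2) (Fin 2) ℝ} {x y : Fin 2 → ℝ} :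
    isNE A B x y ↔ x ∈ Simp 2 ∧ y ∈ Simp 2 ∧
      (∀ i, A.mulVec y i ≤ pay A x y) ∧ (∀ j, purePay B x j ≤ pay B x y) := by
  constructor
  · rintro ⟨hx, hy, hI, hII⟩
    refine ⟨hx, hy, fun i => ?_, fun j => ?_⟩
    · have := hI (pur i) (pur_mem i); rwa [pay_pur_left] at this
    · have := hII (pur j) (pur_mem j); rwa [pay_pur_right] at this
  · rintro ⟨hx, hy, hI, hII⟩
    refine ⟨hx, hy, fun x' hx' => ?_, fun y' hy' => ?_⟩
    · rw [pay_eq_dot1 A x' y]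
      obtain ⟨h0, h1, hs⟩ := mem_simp.1 hx'
      have hp : x' 0 * pay A x y + x' 1 * pay A x y = pay A x y := by
        rw [← add_mul, hs, one_mul]
      linarith [mul_le_mul_of_nonneg_left (hI 0) h0,
        mul_le_mul_of_nonneg_left (hI 1) h1]
    · rw [pay_eq_dot2 B x y']
      obtain ⟨h0, h1, hs⟩ := mem_simp.1 hy'
      have hp : y' 0 * pay B x y + y' 1 * pay B x y = pay B x y := by
        rw [← add_mul, hs, one_mul]
      linarith [mul_le_mul_of_nonneg_left (hII 0) h0,
        mul_le_mul_of_nonneg_left (hII 1) h1]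

lemma nondeg_row {B : Matrix (Fin 2) (Fin 2) ℝ} (h : NondegFor B) (i : Fin 2) :
    B i 0 ≠ B i 1 := by
  intro he
  have h1 := h (pur i) (pur_mem i)
  have hBR : BRII B (pur i) = Set.univ := by
    ext k
    simp only [BRII, Set.mem_setOf_eq, Set.mem_univ, iff_true]
    intro k'
    rw [purePay_pur, purePay_pur]
    fin_cases k <;> fin_cases k' <;> simp [he, le_refl]
  have hsupp : {k | pur i k ≠ 0} = {i} := by
    ext k
    by_cases hk : k = i <;> simp [pur, hk]
  rw [hBR, hsupp] at h1
  rw [Set.ncard_univ, Set.ncard_singleton] at h1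
  simp [Nat.card_eq_fintype_card] at h1

lemma Ecols_eq {B : Matrix (Fin 2) (Fin 2) ℝ} (h0 : B 0 0 ≠ B 0 1) (j : Fin 2) :
    Ecols B j = {j} := by
  ext k
  simp only [Ecols, Set.mem_setOf_eq, Set.mem_singleton_iff]
  constructor
  · intro hk
    by_contra hne
    have := hk 0
    fin_cases k <;> fin_cases j <;> simp_all
  · rintro rfl
    exact fun i => rfl

lemma minE_eq {A B : Matrix (Fin 2) (Fin 2) ℝ} {j : Fin 2} (hE : Ecols B j = {j})
    (x : Fin 2 → ℝ) : minE A B j x = purePay A x j := by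
  unfold minE
  have hset : {w | ∃ k ∈ Ecols B j, w = purePay A x k} = {purePay A x j} := by
    ext w; simp [hE]
  rw [hset, csInf_singleton]

lemma bddA (A B : Matrix (Fin 2) (Fin 2) ℝ) (hE : ∀ k, Ecols B k = {k}) :
    BddAbove {v | ∃ j ∈ Dset B, ∃ x ∈ XReg B j, v = minE A B j x} := by
  refine ⟨|A 0 0| + |A 0 1| + |A 1 0| + |A 1 1|, ?_⟩
  rintro v ⟨j, hj, x, hx, rfl⟩
  rw [minE_eq (hE j), purePay_eq]
  obtain ⟨h0, h1, hs⟩ := mem_simp.1 (mem_XReg.1 hx).1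
  have a00 := abs_nonneg (A 0 0); have a01 := abs_nonneg (A 0 1)
  have a10 := abs_nonneg (A 1 0); have a11 := abs_nonneg (A 1 1)
  have b00 := le_abs_self (A 0 0); have b01 := le_abs_self (A 0 1)
  have b10 := le_abs_self (A 1 0); have b11 := le_abs_self (A 1 1)
  have c0 : x 0 ≤ 1 := by linarith
  have c1 : x 1 ≤ 1 := by linarith
  rcases fin2 j 0 1 (by decide) with rfl | rfl <;>
    linarith [mul_le_mul_of_nonneg_left b00 h0, mul_le_mul_of_nonneg_left b01 h0,
      mul_le_mul_of_nonneg_left b10 h1, mul_le_mul_of_nonneg_left b11 h1,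
      mul_le_of_le_one_left a00 c0, mul_le_of_le_one_left a01 c0,
      mul_le_of_le_one_left a10 c1, mul_le_of_le_one_left a11 c1]

lemma XL_opt {A B : Matrix (Fin 2) (Fin 2) ℝ} (hE : ∀ k, Ecols B k = {k})
    {xL : Fin 2 → ℝ} (hxL : xL ∈ XLset A B) :
    ∃ j, j ∈ Dset B ∧ xL ∈ XReg B j ∧
      ∀ j' ∈ Dset B, ∀ x' ∈ XReg B j', purePay A x' j' ≤ purePay A xL j := by
  obtain ⟨j, hj, hx, heq⟩ := hxL
  refine ⟨j, hj, hx, fun j' hj' x' hx' => ?_⟩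
  have h2 : minE A B j' x' ≤ alphaL A B :=
    le_csSup (bddA A B hE) ⟨j', hj', x', hx', rfl⟩
  rw [minE_eq (hE j')] at h2
  rw [minE_eq (hE j)] at heq
  rw [heq]
  exact h2

lemma pure_mem_NEX {A B : Matrix (Fin 2) (Fin 2) ℝ} {i j : Fin 2}
    (hA : ∀ k, A k j ≤ A i j) (hB : ∀ k, B i k ≤ B i j) : pur i ∈ NEX A B :=
  ⟨pur j, isNE_iff.2 ⟨pur_mem i, pur_mem j,
    fun k => by rw [mulVec_pur, pay_pur_pur]; exact hA k,
    fun k => by rw [purePay_pur, pay_pur_pur]; exact hB k⟩⟩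

lemma mem_NEX_mixed {A B : Matrix (Fin 2) (Fin 2) ℝ} {x y : Fin 2 → ℝ}
    (hx : x ∈ Simp 2) (hy : y ∈ Simp 2)
    (hI : A.mulVec y 0 = A.mulVec y 1) (hII : purePay B x 0 = purePay B x 1) :
    x ∈ NEX A B := by
  refine ⟨y, isNE_iff.2 ⟨hx, hy, fun k => ?_, fun k => ?_⟩⟩
  · rw [pay_eq_dot1, ← hI]
    obtain ⟨h0, h1, hs⟩ := mem_simp.1 hx
    have hp : x 0 * A.mulVec y 0 + x 1 * A.mulVec y 0 = A.mulVec y 0 := by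
      rw [← add_mul, hs, one_mul]
    rcases fin2 k 0 1 (by decide) with rfl | rfl
    · linarith
    · rw [← hI]; linarith
  · rw [pay_eq_dot2, ← hII]
    obtain ⟨h0, h1, hs⟩ := mem_simp.1 hy
    have hp : purePay B x 0 * y 0 + purePay B x 0 * y 1 = purePay B x 0 := by
      rw [← mul_add, hs, mul_one]
    rcases fin2 k 0 1 (by decide) with rfl | rfl
    · linarith
    · rw [← hII]; linarith

lemma conv_strict {x0 x1 a0 a1 b0 b1 : ℝ} (h0 : 0 ≤ x0) (h1 : 0 ≤ x1)
    (hs : x0 + x1 = 1) (ha : a0 < b0) (hb : a1 < b1) :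
    x0 * a0 + x1 * a1 < x0 * b0 + x1 * b1 := by
  rcases le_or_gt x0 (1/2) with hx | hx
  · nlinarith
  · nlinarith

lemma nonneg_factor {a b : ℝ} (h : 0 ≤ a * b) (hb : 0 < b) : 0 ≤ a := by
  by_contra hn
  push_neg at hn
  nlinarith

lemma pay_transpose (M : Matrix (Fin 2) (Fin 2) ℝ) (x y : Fin 2 → ℝ) :
    pay Mᵀ y x = pay M x y := by
  simp [pay_eq_dot1, mulVec_eq, Matrix.transpose_apply]; ring

lemma isNE_swap {A B : Matrix (Fin 2) (Fin 2) ℝ} {x y : Fin 2 → ℝ} :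
    isNE Bᵀ Aᵀ y x ↔ isNE A B x y := by
  constructor
  · rintro ⟨hy, hx, hII, hI⟩
    refine ⟨hx, hy, fun x' hx' => ?_, fun y' hy' => ?_⟩
    · have := hI x' hx'; rwa [pay_transpose, pay_transpose] at this
    · have := hII y' hy'; rwa [pay_transpose, pay_transpose] at this
  · rintro ⟨hx, hy, hI, hII⟩
    refine ⟨hy, hx, fun y' hy' => ?_, fun x' hx' => ?_⟩
    · rw [pay_transpose, pay_transpose]; exact hII y' hy'
    · rw [pay_transpose, pay_transpose]; exact hI x' hx'

lemma NEY_swap (A B : Matrix (Fin 2) (Fin 2) ℝ) : NEX Bᵀ Aᵀ = NEY A B := by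
  ext y
  exact ⟨fun ⟨x, h⟩ => ⟨x, isNE_swap.1 h⟩, fun ⟨x, h⟩ => ⟨x, isNE_swap.2 h⟩⟩

lemma NEX_swap (A B : Matrix (Fin 2) (Fin 2) ℝ) : NEY Bᵀ Aᵀ = NEX A B := by
  ext x
  exact ⟨fun ⟨y, h⟩ => ⟨y, isNE_swap.1 h⟩, fun ⟨y, h⟩ => ⟨y, isNE_swap.2 h⟩⟩

end Stmt16Proof
namespace Stmt16Proof

lemma pin {t p q g g' : ℝ} (hp : 0 < p) (hq : 0 < q) (hg : g < g')
    (hreg : t * (p + q) ≤ p)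
    (hgap : q / (p + q) * g + p / (p + q) * g' ≤ (1 - t) * g + t * g') :
    t = p / (p + q) := by
  have hpq : (0:ℝ) < p + q := by linarith
  rw [eq_div_iff hpq.ne']
  have h1 : q / (p + q) = 1 - p / (p + q) := by field_simp; ring
  rw [h1] at hgap
  have hc1 : p / (p + q) * (p + q) = p := div_mul_cancel₀ _ hpq.ne'
  have key : 0 ≤ (t - p / (p + q)) * (g' - g) := by nlinarith [hgap]
  have h2 : 0 ≤ t - p / (p + q) := nonneg_factor key (by linarith)
  have h3 : p ≤ t * (p + q) := by nlinarith [mul_nonneg h2 hpq.le, hc1]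
  linarith

lemma pure_branch {A B : Matrix (Fin 2) (Fin 2) ℝ} {i i' j j' : Fin 2} {xL : Fin 2 → ℝ}
    (hi : i' ≠ i) (hj : j' ≠ j)
    (h1 : B i j' < B i j) (h3 : A i' j < A i j)
    (hreg : xL ∈ XReg B j)
    (hopt : ∀ x' ∈ XReg B j, purePay A x' j ≤ purePay A xL j) : xL ∈ NEX A B := by
  have hpur : pur i ∈ XReg B j := mem_XReg.2 ⟨pur_mem i, fun k => by
    rcases fin2 k j j' hj with rfl | rfl
    · exact le_rfl
    · rw [purePay_pur, purePay_pur]; exact h1.le⟩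
  have hgap := hopt (pur i) hpur
  rw [purePay_pur, purePay_pair hi] at hgap
  obtain ⟨hL0, hL1, hLs⟩ := simp_pair hi (mem_XReg.1 hreg).1
  have hxLi : xL i = 1 - xL i' := by linarith
  rw [hxLi] at hgap
  have h4 : 0 ≤ (0 - xL i') * (A i j - A i' j) := by nlinarith [hgap]
  have h5 : 0 ≤ 0 - xL i' := nonneg_factor h4 (by linarith)
  have hz : xL i' = 0 := by linarith
  rw [eq_pur_of hi (mem_XReg.1 hreg).1 hz]
  exact pure_mem_NEX
    (fun k => by rcases fin2 k i i' hi with rfl | rfl; exacts [le_rfl, h3.le])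
    (fun k => by rcases fin2 k j j' hj with rfl | rfl; exacts [le_rfl, h1.le])

lemma mixed_branch {A B : Matrix (Fin 2) (Fin 2) ℝ} {i i' j j' : Fin 2} {xL : Fin 2 → ℝ}
    (hi : i' ≠ i) (hj : j' ≠ j)
    (hp : B i j' < B i j) (hq : B i' j < B i' j')
    (h5 : A i j < A i' j) (h6 : A i' j' < A i j')
    (hreg : xL ∈ XReg B j)
    (hopt : ∀ x' ∈ XReg B j, purePay A x' j ≤ purePay A xL j) :
    xL ∈ NEX A B := by
  have hppos : (0:ℝ) < B i j - B i j' := by linarith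
  have hqpos : (0:ℝ) < B i' j' - B i' j := by linarith
  have hpq : (0:ℝ) < (B i j - B i j') + (B i' j' - B i' j) := by linarith
  -- the indifference point of player II
  set xs : Fin 2 → ℝ := fun k => if k = i
    then (B i' j' - B i' j) / ((B i j - B i j') + (B i' j' - B i' j))
    else (B i j - B i j') / ((B i j - B i j') + (B i' j' - B i' j)) with hxsdef
  have hxsi : xs i = (B i' j' - B i' j) / ((B i j - B i j') + (B i' j' - B i' j)) :=
    if_pos rfl
  have hxsi' : xs i' = (B i j - B i j') / ((B i j - B i j') + (B i' j' - B i' j)) :=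
    if_neg hi
  have hsum : xs i + xs i' = 1 := by
    rw [hxsi, hxsi', ← add_div, div_eq_one_iff_eq hpq.ne']
    ring
  have hp1 : 0 ≤ xs i := by rw [hxsi]; exact div_nonneg hqpos.le hpq.le
  have hp2 : 0 ≤ xs i' := by rw [hxsi']; exact div_nonneg hppos.le hpq.le
  have hxsS : xs ∈ Simp 2 := by
    rw [mem_simp]
    rcases fin2' hi with ⟨hii, hii'⟩ | ⟨hii, hii'⟩ <;> rw [← hii, ← hii']
    · exact ⟨hp1, hp2, hsum⟩
    · exact ⟨hp2, hp1, by linarith⟩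
  have hind : purePay B xs j = purePay B xs j' := by
    rw [purePay_pair hi, purePay_pair hi, hxsi, hxsi']
    field_simp
    ring
  have hxsreg : xs ∈ XReg B j := mem_XReg.2 ⟨hxsS, fun k => by
    rcases fin2 k j j' hj with rfl | rfl
    · exact le_rfl
    · exact le_of_eq hind.symm⟩
  have hgap := hopt xs hxsreg
  obtain ⟨hL0, hL1, hLs⟩ := simp_pair hi (mem_XReg.1 hreg).1
  have hxLi : xL i = 1 - xL i' := by linarith
  have hregineq := (mem_XReg.1 hreg).2 j'
  rw [purePay_pair hi, purePay_pair hi] at hregineq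
  have hrg : xL i' * ((B i j - B i j') + (B i' j' - B i' j)) ≤ B i j - B i j' := by
    nlinarith [hregineq]
  rw [purePay_pair hi, purePay_pair hi, hxsi, hxsi', hxLi] at hgap
  have hLi' : xL i' = (B i j - B i j') / ((B i j - B i j') + (B i' j' - B i' j)) :=
    pin hppos hqpos h5 hrg hgap
  have hxLeq : xL = xs := by
    funext k
    rcases fin2 k i i' hi with rfl | rfl
    · have e : xs i' = xL i' := by rw [hxsi', hLi']
      linarith [hsum, hLs, e]
    · rw [hxsi']
      exact hLi'
  -- the indifference point of player I
  have hrpos : (0:ℝ) < A i j' - A i' j' := by linarith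
  have hspos : (0:ℝ) < A i' j - A i j := by linarith
  have hEy : (0:ℝ) < (A i j' - A i' j') + (A i' j - A i j) := by linarith
  set ys : Fin 2 → ℝ := fun k => if k = j
    then (A i j' - A i' j') / ((A i j' - A i' j') + (A i' j - A i j))
    else (A i' j - A i j) / ((A i j' - A i' j') + (A i' j - A i j)) with hysdef
  have hysj : ys j = (A i j' - A i' j') / ((A i j' - A i' j') + (A i' j - A i j)) :=
    if_pos rfl
  have hysj' : ys j' = (A i' j - A i j) / ((A i j' - A i' j') + (A i' j - A i j)) :=
    if_neg hj
  have hsumy : ys j + ys j' = 1 := by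
    rw [hysj, hysj', ← add_div, div_eq_one_iff_eq hEy.ne']
  have hq1 : 0 ≤ ys j := by rw [hysj]; exact div_nonneg hrpos.le hEy.le
  have hq2 : 0 ≤ ys j' := by rw [hysj']; exact div_nonneg hspos.le hEy.le
  have hysS : ys ∈ Simp 2 := by
    rw [mem_simp]
    rcases fin2' hj with ⟨hjj, hjj'⟩ | ⟨hjj, hjj'⟩ <;> rw [← hjj, ← hjj']
    · exact ⟨hq1, hq2, hsumy⟩
    · exact ⟨hq2, hq1, by linarith⟩
  have hindy : A.mulVec ys i = A.mulVec ys i' := by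
    rw [mulVec_pair hj, mulVec_pair hj, hysj, hysj']
    field_simp
    ring
  rw [hxLeq]
  refine mem_NEX_mixed hxsS hysS ?_ ?_
  · rcases fin2' hi with ⟨hii, hii'⟩ | ⟨hii, hii'⟩
    · rw [← hii, ← hii']; exact hindy
    · rw [← hii, ← hii']; exact hindy.symm
  · rcases fin2' hj with ⟨hjj, hjj'⟩ | ⟨hjj, hjj'⟩
    · rw [← hjj, ← hjj']; exact hind
    · rw [← hjj, ← hjj']; exact hind.symm

end Stmt16Proof
namespace Stmt16Proof

lemma caseC {A B : Matrix (Fin 2) (Fin 2) ℝ} {i i' j j' : Fin 2}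
    (hi : i' ≠ i) (hj : j' ≠ j)
    (hdom : ∀ y ∈ Simp 2, purePay Aᵀ y i' < purePay Aᵀ y i)
    (hrow : B i j' < B i j) :
    XLset Bᵀ Aᵀ = NEY A B := by
  have hAT : Aᵀ 0 0 ≠ Aᵀ 0 1 := by
    have h0 := hdom (pur 0) (pur_mem 0)
    rw [purePay_pur, purePay_pur] at h0
    rcases fin2' hi with ⟨hii, hii'⟩ | ⟨hii, hii'⟩
    · rw [hii, hii'] at h0; exact ne_of_gt h0
    · rw [hii, hii'] at h0; exact ne_of_lt h0
  have hE : ∀ k, Ecols Aᵀ k = {k} := Ecols_eq hAT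
  have hhalf : (fun _ : Fin 2 => (1:ℝ)/2) ∈ Simp 2 := by rw [mem_simp]; norm_num
  have hregmem : ∀ y ∈ Simp 2, y ∈ XReg Aᵀ i := fun y hy => mem_XReg.2 ⟨hy, fun k => by
    rcases fin2 k i i' hi with rfl | rfl
    · exact le_rfl
    · exact (hdom y hy).le⟩
  have hiD : i ∈ Dset Aᵀ := ⟨fun _ => 1/2, hregmem _ hhalf, fun _ => by norm_num⟩
  have hempty : ∀ y, y ∈ XReg Aᵀ i' → False := fun y hy =>
    absurd ((mem_XReg.1 hy).2 i) (not_le.2 (hdom y (mem_XReg.1 hy).1))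
  have hub : ∀ v ∈ {v | ∃ k ∈ Dset Aᵀ, ∃ y ∈ XReg Aᵀ k, v = minE Bᵀ Aᵀ k y}, v ≤ B i j := by
    rintro v ⟨k, hk, y, hy, rfl⟩
    have hki : k = i := by
      rcases fin2 k i i' hi with rfl | rfl
      · rfl
      · exact (hempty y hy).elim
    rw [hki] at hy
    rw [hki, minE_eq (hE i), purePay_pair hj Bᵀ y i, Matrix.transpose_apply,
      Matrix.transpose_apply]
    obtain ⟨hy0, hy1, hys⟩ := simp_pair hj (mem_XReg.1 hy).1
    have hyj : y j = 1 - y j' := by linarith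
    rw [hyj]
    nlinarith [mul_nonneg hy1 (by linarith : (0:ℝ) ≤ B i j - B i j')]
  have hval : alphaL Bᵀ Aᵀ = B i j := by
    apply IsGreatest.csSup_eq
    constructor
    · exact ⟨i, hiD, pur j, hregmem _ (pur_mem j),
        by rw [minE_eq (hE i), purePay_pur, Matrix.transpose_apply]⟩
    · exact hub
  have hXLsub : ∀ y ∈ XLset Bᵀ Aᵀ, y = pur j := by
    rintro y ⟨k, hk, hyreg, hveq⟩
    have hki : k = i := by
      rcases fin2 k i i' hi with rfl | rfl
      · rfl
      · exact (hempty y hyreg).elim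
    rw [hki] at hyreg hveq
    rw [minE_eq (hE i), hval, purePay_pair hj Bᵀ y i, Matrix.transpose_apply,
      Matrix.transpose_apply] at hveq
    obtain ⟨hy0, hy1, hys⟩ := simp_pair hj (mem_XReg.1 hyreg).1
    have hyj : y j = 1 - y j' := by linarith
    rw [hyj] at hveq
    have hz : y j' * (B i j - B i j') = 0 := by linear_combination -hveq
    rcases mul_eq_zero.1 hz with h | h
    · exact eq_pur_of hj (mem_XReg.1 hyreg).1 h
    · linarith
  have hpurXL : pur j ∈ XLset Bᵀ Aᵀ :=
    ⟨i, hiD, hregmem _ (pur_mem j),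
      by rw [minE_eq (hE i), purePay_pur, Matrix.transpose_apply, hval]⟩
  have hNEYsub : ∀ y ∈ NEY A B, y = pur j := by
    rintro y ⟨x, hNE⟩
    obtain ⟨hxS, hyS, hI, hII⟩ := isNE_iff.1 hNE
    have hgi := hI i
    rw [pay_pair1 hi] at hgi
    have hdom' : A.mulVec y i' < A.mulVec y i := by
      rw [mulVec_eqT, mulVec_eqT]; exact hdom y hyS
    obtain ⟨hx0, hx1, hxs⟩ := simp_pair hi hxS
    have hxi : x i = 1 - x i' := by linarith
    rw [hxi] at hgi
    have h4 : 0 ≤ (0 - x i') * (A.mulVec y i - A.mulVec y i') := by nlinarith [hgi]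
    have h5 : x i' = 0 :=
      le_antisymm (by linarith [nonneg_factor h4 (by linarith)]) hx1
    have hxp : x = pur i := eq_pur_of hi hxS h5
    have hgj := hII j
    rw [hxp, purePay_pur, pay_pur_left, mulVec_pair hj] at hgj
    obtain ⟨hy0, hy1, hys⟩ := simp_pair hj hyS
    have hyj : y j = 1 - y j' := by linarith
    rw [hyj] at hgj
    have h6 : 0 ≤ (0 - y j') * (B i j - B i j') := by nlinarith [hgj]
    have h7 : y j' = 0 :=
      le_antisymm (by linarith [nonneg_factor h6 (by linarith)]) hy1
    exact eq_pur_of hj hyS h7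
  have hpurNEY : pur j ∈ NEY A B := by
    refine ⟨pur i, isNE_iff.2 ⟨pur_mem i, pur_mem j, fun k => ?_, fun k => ?_⟩⟩
    · rw [mulVec_pur, pay_pur_pur]
      rcases fin2 k i i' hi with rfl | rfl
      · exact le_rfl
      · have hd := hdom (pur j) (pur_mem j)
        rw [purePay_pur, purePay_pur, Matrix.transpose_apply,
          Matrix.transpose_apply] at hd
        exact hd.le
    · rw [purePay_pur, pay_pur_pur]
      rcases fin2 k j j' hj with rfl | rfl
      · exact le_rfl
      · exact hrow.le
  ext y
  constructor
  · intro h; rw [hXLsub y h]; exact hpurNEY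
  · intro h; rw [hNEYsub y h]; exact hpurXL

end Stmt16Proof
namespace Stmt16Proof

lemma main (A B : Matrix (Fin 2) (Fin 2) ℝ) (hndI : NondegFor B) (hndII : NondegFor Aᵀ) :
    XLset A B ⊆ NEX A B ∨ XLset Bᵀ Aᵀ = NEY A B := by
  have hB0 := nondeg_row hndI 0
  have hB1 := nondeg_row hndI 1
  have hA0 := nondeg_row hndII 0
  have hA1 := nondeg_row hndII 1
  rw [Matrix.transpose_apply, Matrix.transpose_apply] at hA0 hA1
  have hEB : ∀ k, Ecols B k = {k} := Ecols_eq hB0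
  have h10 : (1 : Fin 2) ≠ 0 := by decide
  have h01 : (0 : Fin 2) ≠ 1 := by decide
  rcases hB0.lt_or_gt with hd0 | hd0 <;> rcases hB1.lt_or_gt with hd1 | hd1
  · -- column 1 strictly dominant
    left
    intro xL hxL
    obtain ⟨k, hk, hreg, hopt⟩ := XL_opt hEB hxL
    rcases fin2 k 0 1 h10 with rfl | rfl
    · have hc := (mem_XReg.1 hreg).2 1
      obtain ⟨h0, h1, hs⟩ := mem_simp.1 (mem_XReg.1 hreg).1
      rw [purePay_eq, purePay_eq] at hc
      linarith [conv_strict h0 h1 hs hd0 hd1]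
    · rcases hA1.lt_or_gt with hA | hA
      · exact pure_branch h01 h01 hd1 hA hreg (hopt 1 hk)
      · exact pure_branch h10 h01 hd0 hA hreg (hopt 1 hk)
  · -- crossing, orientation 1 : B00<B01, B11<B10
    rcases hA0.lt_or_gt with hc0 | hc0 <;> rcases hA1.lt_or_gt with hc1 | hc1
    · -- row 1 strictly dominant
      right
      refine caseC h01 h10 (fun y hy => ?_) hd1
      rw [purePay_eq Aᵀ, purePay_eq Aᵀ]
      simp only [Matrix.transpose_apply]
      obtain ⟨h0, h1, hs⟩ := mem_simp.1 hy
      exact conv_strict h0 h1 hs hc0 hc1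
    · -- coordination type 1
      left
      intro xL hxL
      obtain ⟨k, hk, hreg, hopt⟩ := XL_opt hEB hxL
      rcases fin2 k 0 1 h10 with rfl | rfl
      · exact pure_branch h01 h10 hd1 hc0 hreg (hopt 0 hk)
      · exact pure_branch h10 h01 hd0 hc1 hreg (hopt 1 hk)
    · -- matching pennies type 1
      left
      intro xL hxL
      obtain ⟨k, hk, hreg, hopt⟩ := XL_opt hEB hxL
      rcases fin2 k 0 1 h10 with rfl | rfl
      · exact mixed_branch h01 h10 hd1 hd0 hc0 hc1 hreg (hopt 0 hk)
      · exact mixed_branch h10 h01 hd0 hd1 hc1 hc0 hreg (hopt 1 hk)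
    · -- row 0 strictly dominant
      right
      refine caseC h10 h01 (fun y hy => ?_) hd0
      rw [purePay_eq Aᵀ, purePay_eq Aᵀ]
      simp only [Matrix.transpose_apply]
      obtain ⟨h0, h1, hs⟩ := mem_simp.1 hy
      exact conv_strict h0 h1 hs hc0 hc1
  · -- crossing, orientation 2 : B01<B00, B10<B11
    rcases hA0.lt_or_gt with hc0 | hc0 <;> rcases hA1.lt_or_gt with hc1 | hc1
    · -- row 1 strictly dominant
      right
      refine caseC h01 h01 (fun y hy => ?_) hd1
      rw [purePay_eq Aᵀ, purePay_eq Aᵀ]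
      simp only [Matrix.transpose_apply]
      obtain ⟨h0, h1, hs⟩ := mem_simp.1 hy
      exact conv_strict h0 h1 hs hc0 hc1
    · -- matching pennies type 2
      left
      intro xL hxL
      obtain ⟨k, hk, hreg, hopt⟩ := XL_opt hEB hxL
      rcases fin2 k 0 1 h10 with rfl | rfl
      · exact mixed_branch h10 h10 hd0 hd1 hc0 hc1 hreg (hopt 0 hk)
      · exact mixed_branch h01 h01 hd1 hd0 hc1 hc0 hreg (hopt 1 hk)
    · -- coordination type 2
      left
      intro xL hxL
      obtain ⟨k, hk, hreg, hopt⟩ := XL_opt hEB hxL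
      rcases fin2 k 0 1 h10 with rfl | rfl
      · exact pure_branch h10 h10 hd0 hc0 hreg (hopt 0 hk)
      · exact pure_branch h01 h01 hd1 hc1 hreg (hopt 1 hk)
    · -- row 0 strictly dominant
      right
      refine caseC h10 h10 (fun y hy => ?_) hd0
      rw [purePay_eq Aᵀ, purePay_eq Aᵀ]
      simp only [Matrix.transpose_apply]
      obtain ⟨h0, h1, hs⟩ := mem_simp.1 hy
      exact conv_strict h0 h1 hs hc0 hc1
  · -- column 0 strictly dominant
    left
    intro xL hxL
    obtain ⟨k, hk, hreg, hopt⟩ := XL_opt hEB hxL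
    rcases fin2 k 0 1 h10 with rfl | rfl
    · rcases hA0.lt_or_gt with hA | hA
      · exact pure_branch h01 h10 hd1 hA hreg (hopt 0 hk)
      · exact pure_branch h10 h10 hd0 hA hreg (hopt 0 hk)
    · have hc := (mem_XReg.1 hreg).2 0
      obtain ⟨h0, h1, hs⟩ := mem_simp.1 (mem_XReg.1 hreg).1
      rw [purePay_eq, purePay_eq] at hc
      linarith [conv_strict h0 h1 hs hd0 hd1]

end Stmt16Proof
/-- in a 2×2 bimatrix game that is non-degenerate for both players,
exactly one of the following holds:
(i) some `x^L ∈ X^L` is not a Nash equilibrium strategy and `Y^L = NE(Y)`;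
(ii) some `y^L ∈ Y^L` is not a Nash equilibrium strategy and `X^L = NE(X)`;
(iii) `X^L ⊆ NE(X)` and `Y^L ⊆ NE(Y)`.
(Player II's leader quantities are those of the game with matrices `(Bᵀ, Aᵀ)`.) -/
theorem stmt16 (A B : Matrix (Fin 2) (Fin 2) ℝ)
    (hndI : NondegFor B) (hndII : NondegFor Aᵀ) :
    (((∃ xL ∈ XLset A B, xL ∉ NEX A B) ∧ XLset Bᵀ Aᵀ = NEY A B) ∧
      ¬ ((∃ yL ∈ XLset Bᵀ Aᵀ, yL ∉ NEY A B) ∧ XLset A B = NEX A B) ∧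
      ¬ (XLset A B ⊆ NEX A B ∧ XLset Bᵀ Aᵀ ⊆ NEY A B)) ∨
    (¬ ((∃ xL ∈ XLset A B, xL ∉ NEX A B) ∧ XLset Bᵀ Aᵀ = NEY A B) ∧
      ((∃ yL ∈ XLset Bᵀ Aᵀ, yL ∉ NEY A B) ∧ XLset A B = NEX A B) ∧
      ¬ (XLset A B ⊆ NEX A B ∧ XLset Bᵀ Aᵀ ⊆ NEY A B)) ∨
    (¬ ((∃ xL ∈ XLset A B, xL ∉ NEX A B) ∧ XLset Bᵀ Aᵀ = NEY A B) ∧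
      ¬ ((∃ yL ∈ XLset Bᵀ Aᵀ, yL ∉ NEY A B) ∧ XLset A B = NEX A B) ∧
      (XLset A B ⊆ NEX A B ∧ XLset Bᵀ Aᵀ ⊆ NEY A B)) := by
  have F := Stmt16Proof.main A B hndI hndII
  have F' := Stmt16Proof.main Bᵀ Aᵀ hndII (by rw [Matrix.transpose_transpose]; exact hndI)
  rw [Matrix.transpose_transpose, Matrix.transpose_transpose,
    Stmt16Proof.NEY_swap, Stmt16Proof.NEX_swap] at F'
  by_cases hP1 : ∃ xL ∈ XLset A B, xL ∉ NEX A B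
  · have P2 : XLset Bᵀ Aᵀ = NEY A B := by
      rcases F with h | h
      · obtain ⟨xL, h1, h2⟩ := hP1; exact absurd (h h1) h2
      · exact h
    refine Or.inl ⟨⟨hP1, P2⟩, ?_, ?_⟩
    · rintro ⟨⟨yL, hyL, hn⟩, -⟩
      exact hn (P2 ▸ hyL)
    · rintro ⟨hC1, -⟩
      obtain ⟨xL, h1, h2⟩ := hP1
      exact h2 (hC1 h1)
  · by_cases hP3 : ∃ yL ∈ XLset Bᵀ Aᵀ, yL ∉ NEY A B
    · have P4 : XLset A B = NEX A B := by
        rcases F' with h | h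
        · obtain ⟨yL, h1, h2⟩ := hP3; exact absurd (h h1) h2
        · exact h
      refine Or.inr (Or.inl ⟨?_, ⟨hP3, P4⟩, ?_⟩)
      · rintro ⟨h, -⟩; exact hP1 h
      · rintro ⟨-, hC2⟩
        obtain ⟨yL, h1, h2⟩ := hP3
        exact h2 (hC2 h1)
    · push_neg at hP1 hP3
      refine Or.inr (Or.inr ⟨?_, ?_, hP1, hP3⟩)
      · rintro ⟨⟨xL, h1, h2⟩, -⟩; exact h2 (hP1 xL h1)
      · rintro ⟨⟨yL, h1, h2⟩, -⟩; exact h2 (hP3 yL h1)
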